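/- Let $H_1, H_2$ be half-lines with common origin $O$ determining a wedge with clockwise angle $\pi \leq \alpha \leq 2\pi$ (a large wedge). Then the subgraph of the grid $\mathbb{Z}\times\mathbb{Z}$ spanned by the lattice points in the wedge is connected. -/

import Mathlib

noncomputable def rotCW (α : ℝ) (u : ℝ × ℝ) : ℝ × ℝ :=
  (Real.cos α * u.1 + Real.sin α * u.2, -Real.sin α * u.1 + Real.cos α * u.2)

def toR (v : ℤ × ℤ) : ℝ × ℝ := ((v.1 : ℝ), (v.2 : ℝ))

def crossR (u v : ℝ × ℝ) : ℝ := u.1 * v.2 - u.2 * v.1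

def largeWedge (O u₁ u₂ : ℝ × ℝ) : Set (ℝ × ℝ) :=
  {p : ℝ × ℝ | crossR u₁ (p - O) ≤ 0 ∨ 0 ≤ crossR u₂ (p - O)}

def adj (W : Set (ℝ × ℝ)) (v w : ℤ × ℤ) : Prop :=
  (v - w = (1, 0) ∨ v - w = (-1, 0) ∨ v - w = (0, 1) ∨ v - w = (0, -1)) ∧
    toR v ∈ W ∧ toR w ∈ W

-- auxiliary

def isDir (e : ℤ × ℤ) : Prop :=
  e = (1, 0) ∨ e = (-1, 0) ∨ e = (0, 1) ∨ e = (0, -1)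

lemma adj_symm (W : Set (ℝ × ℝ)) : Symmetric (adj W) := by
  rintro v w ⟨h, hv, hw⟩
  refine ⟨?_, hw, hv⟩
  have h' : w - v = -(v - w) := (neg_sub v w).symm
  rcases h with h | h | h | h <;> rw [h] at h' <;>
    simp only [Prod.neg_mk, neg_neg, neg_zero] at h' <;> tauto

lemma rtg_mono {W W' : Set (ℝ × ℝ)} (h : W ⊆ W') {a b : ℤ × ℤ}
    (hab : Relation.ReflTransGen (adj W) a b) :
    Relation.ReflTransGen (adj W') a b :=
  Relation.ReflTransGen.mono (p := adj W') (fun _ _ ⟨hd, hv, hw⟩ => ⟨hd, h hv, h hw⟩) a b hab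

lemma gen_path (W : Set (ℝ × ℝ)) (e : ℤ × ℤ) (he : isDir e)
    (a : ℤ × ℤ) (n : ℕ)
    (h : ∀ c : ℕ, c ≤ n → toR (a + (c : ℤ) • e) ∈ W) :
    Relation.ReflTransGen (adj W) a (a + (n : ℤ) • e) := by
  induction n with
  | zero => simpa using Relation.ReflTransGen.refl
  | succ n ih =>
    refine Relation.ReflTransGen.tail (ih (fun c hc => h c (hc.trans (Nat.le_succ n)))) ?_
    refine ⟨?_, h n (Nat.le_succ n), h (n+1) le_rfl⟩
    have hd : a + (n : ℤ) • e - (a + ((n+1 : ℕ) : ℤ) • e) = -e := by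
      push_cast
      apply Prod.ext <;>
        simp [Prod.smul_fst, Prod.smul_snd, smul_eq_mul] <;> ring
    rcases he with rfl | rfl | rfl | rfl <;> rw [hd] <;>
      decide

lemma exists_dirx (d : ℤ) : ∃ e : ℤ × ℤ, isDir e ∧ ((d.natAbs : ℤ)) • e = (d, 0) := by
  rcases le_or_gt 0 d with hd | hd
  · refine ⟨(1, 0), Or.inl rfl, ?_⟩
    have : (d.natAbs : ℤ) = d := Int.natAbs_of_nonneg hd
    apply Prod.ext <;> simp [this]
  · refine ⟨(-1, 0), Or.inr (Or.inl rfl), ?_⟩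
    have : (d.natAbs : ℤ) = -d := Int.ofNat_natAbs_of_nonpos hd.le
    apply Prod.ext <;> simp [this]

lemma exists_diry (d : ℤ) : ∃ e : ℤ × ℤ, isDir e ∧ ((d.natAbs : ℤ)) • e = (0, d) := by
  rcases le_or_gt 0 d with hd | hd
  · refine ⟨(0, 1), Or.inr (Or.inr (Or.inl rfl)), ?_⟩
    have : (d.natAbs : ℤ) = d := Int.natAbs_of_nonneg hd
    apply Prod.ext <;> simp [this]
  · refine ⟨(0, -1), Or.inr (Or.inr (Or.inr rfl)), ?_⟩
    have : (d.natAbs : ℤ) = -d := Int.ofNat_natAbs_of_nonpos hd.le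
    apply Prod.ext <;> simp [this]

lemma taxi (W : Set (ℝ × ℝ)) (hW : ∀ v : ℤ × ℤ, toR v ∈ W) (a b : ℤ × ℤ) :
    Relation.ReflTransGen (adj W) a b := by
  obtain ⟨ex, hex, hexval⟩ := exists_dirx (b.1 - a.1)
  obtain ⟨ey, hey, heyval⟩ := exists_diry (b.2 - a.2)
  have P1 := gen_path W ex hex a (b.1 - a.1).natAbs (fun c _ => hW _)
  have P2 := gen_path W ey hey (a + ((b.1 - a.1).natAbs : ℤ) • ex) (b.2 - a.2).natAbs
    (fun c _ => hW _)
  have hend : a + ((b.1 - a.1).natAbs : ℤ) • ex + ((b.2 - a.2).natAbs : ℤ) • ey = b := by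
    rw [hexval, heyval]
    apply Prod.ext <;> simp
  rw [hend] at P2
  exact P1.trans P2

lemma cross_step (u O : ℝ × ℝ) (v w : ℤ × ℤ) :
    crossR u (toR (v + w) - O) =
      crossR u (toR v - O) + (u.1 * (w.2 : ℝ) - u.2 * (w.1 : ℝ)) := by
  simp only [crossR, toR, Prod.fst_add, Prod.snd_add, Prod.fst_sub, Prod.snd_sub]
  push_cast
  ring

lemma cross_step_smul (u O : ℝ × ℝ) (v : ℤ × ℤ) (c : ℤ) (e : ℤ × ℤ) :
    crossR u (toR (v + c • e) - O) =
      crossR u (toR v - O) + (c : ℝ) * (u.1 * (e.2 : ℝ) - u.2 * (e.1 : ℝ)) := by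
  rw [cross_step]
  have h1 : (c • e).1 = c * e.1 := rfl
  have h2 : (c • e).2 = c * e.2 := rfl
  rw [h1, h2]
  push_cast
  ring

lemma g_bounds (u : ℝ × ℝ) (hu : u.1 ^ 2 + u.2 ^ 2 = 1) (e : ℤ × ℤ) (he : isDir e) :
    -1 ≤ u.1 * (e.2 : ℝ) - u.2 * (e.1 : ℝ) ∧ u.1 * (e.2 : ℝ) - u.2 * (e.1 : ℝ) ≤ 1 := by
  have h1 : -1 ≤ u.1 ∧ u.1 ≤ 1 := by
    constructor <;> nlinarith [sq_nonneg u.2]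
  have h2 : -1 ≤ u.2 ∧ u.2 ≤ 1 := by
    constructor <;> nlinarith [sq_nonneg u.1]
  rcases he with rfl | rfl | rfl | rfl <;>
    constructor <;> push_cast <;> simp <;> linarith [h1.1, h1.2, h2.1, h2.2]

lemma halfplane_conn (u O : ℝ × ℝ) (hu : u.1 ^ 2 + u.2 ^ 2 = 1)
    (a b : ℤ × ℤ) (ha : crossR u (toR a - O) ≤ 0) (hb : crossR u (toR b - O) ≤ 0) :
    Relation.ReflTransGen (adj {p : ℝ × ℝ | crossR u (p - O) ≤ 0}) a b := by
  set W : Set (ℝ × ℝ) := {p : ℝ × ℝ | crossR u (p - O) ≤ 0} with hWdef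
  have hmem : ∀ v : ℤ × ℤ, crossR u (toR v - O) ≤ 0 → toR v ∈ W := fun v hv => hv
  -- a strongly inward direction
  obtain ⟨e, he, hce⟩ : ∃ e : ℤ × ℤ, isDir e ∧
      u.1 * (e.2 : ℝ) - u.2 * (e.1 : ℝ) ≤ -(1/2) := by
    rcases le_or_gt (1/2) u.1 with h | h
    · exact ⟨(0, -1), Or.inr (Or.inr (Or.inr rfl)), by push_cast; simp; linarith⟩
    rcases le_or_gt u.1 (-(1/2)) with h' | h'
    · exact ⟨(0, 1), Or.inr (Or.inr (Or.inl rfl)), by push_cast; simp; linarith⟩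
    rcases le_or_gt (1/2) u.2 with h2 | h2
    · exact ⟨(1, 0), Or.inl rfl, by push_cast; simp; linarith⟩
    rcases le_or_gt u.2 (-(1/2)) with h2' | h2'
    · exact ⟨(-1, 0), Or.inr (Or.inl rfl), by push_cast; simp; linarith⟩
    · exfalso; nlinarith
  obtain ⟨ex, hex, hexval⟩ := exists_dirx (b.1 - a.1)
  obtain ⟨ey, hey, heyval⟩ := exists_diry (b.2 - a.2)
  set nx : ℕ := (b.1 - a.1).natAbs with hnx
  set ny : ℕ := (b.2 - a.2).natAbs with hny
  set k : ℕ := 2 * (nx + ny) with hk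
  obtain ⟨hgx1, hgx2⟩ := g_bounds u hu ex hex
  obtain ⟨hgy1, hgy2⟩ := g_bounds u hu ey hey
  have hkR : ((k : ℤ) : ℝ) = 2 * ((nx : ℝ) + (ny : ℝ)) := by
    rw [hk]; push_cast; ring
  have fP1 : ∀ c : ℕ, (0:ℝ) ≤ (((c:ℕ) : ℤ) : ℝ) := by
    intro c; push_cast; positivity
  have hkge : ((k : ℤ) : ℝ) * (u.1 * (e.2 : ℝ) - u.2 * (e.1 : ℝ))
      ≤ -((nx : ℝ) + (ny : ℝ)) := by
    have h0 : (0:ℝ) ≤ ((k:ℤ):ℝ) := fP1 k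
    have := mul_le_mul_of_nonneg_left hce h0
    rw [hkR] at this ⊢
    linarith
  -- piece 1 : a to a + k • e
  have P1 : Relation.ReflTransGen (adj W) a (a + (k : ℤ) • e) := by
    apply gen_path W e he a k
    intro c hc
    apply hmem
    rw [cross_step_smul]
    have hce' : (((c:ℕ):ℤ):ℝ) * (u.1 * (e.2 : ℝ) - u.2 * (e.1 : ℝ)) ≤ 0 :=
      mul_nonpos_of_nonneg_of_nonpos (fP1 c) (by linarith)
    linarith
  -- piece 2 : along ex
  have P2 : Relation.ReflTransGen (adj W) (a + (k : ℤ) • e)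
      (a + (k : ℤ) • e + (nx : ℤ) • ex) := by
    apply gen_path W ex hex _ nx
    intro c hc
    apply hmem
    rw [cross_step_smul, cross_step_smul]
    have hcnx : (((c:ℕ):ℤ):ℝ) ≤ (nx : ℝ) := by push_cast; exact_mod_cast hc
    have hcx : (((c:ℕ):ℤ):ℝ) * (u.1 * (ex.2 : ℝ) - u.2 * (ex.1 : ℝ)) ≤ (nx : ℝ) := by
      calc (((c:ℕ):ℤ):ℝ) * (u.1 * (ex.2 : ℝ) - u.2 * (ex.1 : ℝ))
          ≤ (((c:ℕ):ℤ):ℝ) * 1 := mul_le_mul_of_nonneg_left hgx2 (fP1 c)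
        _ = (((c:ℕ):ℤ):ℝ) := mul_one _
        _ ≤ (nx : ℝ) := hcnx
    linarith [hkge]
  -- piece 3 : along ey
  have P3 : Relation.ReflTransGen (adj W) (a + (k : ℤ) • e + (nx : ℤ) • ex)
      (a + (k : ℤ) • e + (nx : ℤ) • ex + (ny : ℤ) • ey) := by
    apply gen_path W ey hey _ ny
    intro c hc
    apply hmem
    rw [cross_step_smul, cross_step_smul, cross_step_smul]
    have hcny : (((c:ℕ):ℤ):ℝ) ≤ (ny : ℝ) := by push_cast; exact_mod_cast hc
    have hnxR : (0:ℝ) ≤ (((nx:ℕ):ℤ):ℝ) := fP1 nx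
    have hcy : (((c:ℕ):ℤ):ℝ) * (u.1 * (ey.2 : ℝ) - u.2 * (ey.1 : ℝ)) ≤ (ny : ℝ) := by
      calc (((c:ℕ):ℤ):ℝ) * (u.1 * (ey.2 : ℝ) - u.2 * (ey.1 : ℝ))
          ≤ (((c:ℕ):ℤ):ℝ) * 1 := mul_le_mul_of_nonneg_left hgy2 (fP1 c)
        _ = (((c:ℕ):ℤ):ℝ) := mul_one _
        _ ≤ (ny : ℝ) := hcny
    have hnxx : (((nx:ℕ):ℤ):ℝ) * (u.1 * (ex.2 : ℝ) - u.2 * (ex.1 : ℝ)) ≤ (nx : ℝ) := by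
      calc (((nx:ℕ):ℤ):ℝ) * (u.1 * (ex.2 : ℝ) - u.2 * (ex.1 : ℝ))
          ≤ (((nx:ℕ):ℤ):ℝ) * 1 := mul_le_mul_of_nonneg_left hgx2 hnxR
        _ = (((nx:ℕ):ℤ):ℝ) := mul_one _
        _ = (nx : ℝ) := by push_cast; ring
    linarith [hkge]
  -- piece 4 : b to b + k • e
  have P4 : Relation.ReflTransGen (adj W) b (b + (k : ℤ) • e) := by
    apply gen_path W e he b k
    intro c hc
    apply hmem
    rw [cross_step_smul]
    have hce' : (((c:ℕ):ℤ):ℝ) * (u.1 * (e.2 : ℝ) - u.2 * (e.1 : ℝ)) ≤ 0 :=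
      mul_nonpos_of_nonneg_of_nonpos (fP1 c) (by linarith)
    linarith
  have hend : a + (k : ℤ) • e + (nx : ℤ) • ex + (ny : ℤ) • ey = b + (k : ℤ) • e := by
    rw [hexval, heyval]
    apply Prod.ext <;> simp <;> ring
  rw [hend] at P3
  exact ((P1.trans P2).trans P3).trans
    (by haveI : Std.Symm (adj W) := ⟨fun x y h => adj_symm W h⟩; exact Relation.ReflTransGen.symmetric.symm _ _ P4)

lemma mul_half_bound (u d : ℝ) (hu : |u| ≤ 1) (hd : |d| ≤ 1/2) : u * d ≤ 1/2 := by
  calc u * d ≤ |u * d| := le_abs_self _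
    _ = |u| * |d| := abs_mul u d
    _ ≤ 1 * (1/2) := mul_le_mul hu hd (abs_nonneg d) (by norm_num)
    _ = 1/2 := by norm_num

set_option maxHeartbeats 1000000 in
lemma common_point (O u₁ u₂ : ℝ × ℝ)
    (h1 : u₁.1 ^ 2 + u₁.2 ^ 2 = 1) (h2 : u₂.1 ^ 2 + u₂.2 ^ 2 = 1)
    (α : ℝ) (hα1 : Real.pi ≤ α) (hlt : α < 2 * Real.pi) (hrot : u₂ = rotCW α u₁) :
    ∃ z : ℤ × ℤ, crossR u₁ (toR z - O) ≤ 0 ∧ 0 ≤ crossR u₂ (toR z - O) := by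
  have hpi := Real.pi_pos
  set s : ℝ := Real.sin (α / 2) with hs
  have hspos : 0 < s := by
    apply Real.sin_pos_of_pos_of_lt_pi <;> linarith
  set v : ℝ × ℝ := rotCW (α / 2) u₁ with hv
  have hv1 : crossR u₁ v = -s := by
    simp only [hv, hs, crossR, rotCW]
    linear_combination (-(Real.sin (α/2))) * h1
  have hsinα : Real.sin α = 2 * Real.sin (α/2) * Real.cos (α/2) := by
    have := Real.sin_two_mul (α/2)
    rwa [show 2 * (α/2) = α by ring] at this
  have hcosα : Real.cos α = 2 * Real.cos (α/2) ^ 2 - 1 := by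
    have := Real.cos_two_mul (α/2)
    rwa [show 2 * (α/2) = α by ring] at this
  have hv2 : crossR u₂ v = s := by
    simp only [hrot, hv, hs, crossR, rotCW]
    linear_combination (Real.cos (α/2) * (u₁.1^2 + u₁.2^2)) * hsinα
      - (Real.sin (α/2) * (u₁.1^2 + u₁.2^2)) * hcosα + Real.sin (α/2) * h1
  set t : ℝ := 2 / s with ht
  have hts : t * s = 2 := div_mul_cancel₀ 2 hspos.ne'
  set z : ℤ × ℤ := (round (O.1 + t * v.1), round (O.2 + t * v.2)) with hz
  set d1 : ℝ := ((z.1 : ℝ)) - (O.1 + t * v.1) with hd1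
  set d2 : ℝ := ((z.2 : ℝ)) - (O.2 + t * v.2) with hd2
  have hd1b : |d1| ≤ 1/2 := by
    rw [hd1, hz]
    rw [abs_sub_comm]
    exact abs_sub_round (O.1 + t * v.1)
  have hd2b : |d2| ≤ 1/2 := by
    rw [hd2, hz]
    rw [abs_sub_comm]
    exact abs_sub_round (O.2 + t * v.2)
  have hu1a : |u₁.1| ≤ 1 := by
    rw [abs_le]; constructor <;> nlinarith [sq_nonneg u₁.2]
  have hu1b : |u₁.2| ≤ 1 := by
    rw [abs_le]; constructor <;> nlinarith [sq_nonneg u₁.1]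
  have hu2a : |u₂.1| ≤ 1 := by
    rw [abs_le]; constructor <;> nlinarith [sq_nonneg u₂.2]
  have hu2b : |u₂.2| ≤ 1 := by
    rw [abs_le]; constructor <;> nlinarith [sq_nonneg u₂.1]
  clear_value s v t z d1 d2
  refine ⟨z, ?_, ?_⟩
  · have hexp : crossR u₁ (toR z - O) = t * crossR u₁ v + (u₁.1 * d2 - u₁.2 * d1) := by
      simp only [crossR, toR, Prod.fst_sub, Prod.snd_sub, hd1, hd2]
      ring
    rw [hexp, hv1]
    have b1 : u₁.1 * d2 ≤ 1/2 := mul_half_bound _ _ hu1a hd2b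
    have b2 : -(u₁.2 * d1) ≤ 1/2 := by
      rw [← mul_neg]; exact mul_half_bound _ _ hu1b (by rwa [abs_neg])
    have hneg2 : t * -s = -2 := by rw [mul_neg, hts]
    linarith [b1, b2]
  · have hexp : crossR u₂ (toR z - O) = t * crossR u₂ v + (u₂.1 * d2 - u₂.2 * d1) := by
      simp only [crossR, toR, Prod.fst_sub, Prod.snd_sub, hd1, hd2]
      ring
    rw [hexp, hv2]
    have b1 : -(u₂.1 * d2) ≤ 1/2 := by
      rw [← mul_neg]; exact mul_half_bound _ _ hu2a (by rwa [abs_neg])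
    have b2 : u₂.2 * d1 ≤ 1/2 := mul_half_bound _ _ hu2b hd1b
    linarith [hts, b1, b2]

theorem stmt7 (O u₁ u₂ : ℝ × ℝ)
    (h1 : u₁.1 ^ 2 + u₁.2 ^ 2 = 1) (h2 : u₂.1 ^ 2 + u₂.2 ^ 2 = 1)
    (α : ℝ) (hα1 : Real.pi ≤ α) (hα2 : α ≤ 2 * Real.pi) (hrot : u₂ = rotCW α u₁) :
    ∀ a b : ℤ × ℤ, toR a ∈ largeWedge O u₁ u₂ → toR b ∈ largeWedge O u₁ u₂ →
      Relation.ReflTransGen (adj (largeWedge O u₁ u₂)) a b := by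
  intro a b ha hb
  rcases eq_or_lt_of_le hα2 with heq | hlt
  · -- α = 2π : the wedge is the whole plane
    have hu : u₂ = u₁ := by
      rw [hrot, heq]
      simp [rotCW, Real.cos_two_pi, Real.sin_two_pi]
    have hall : ∀ v : ℤ × ℤ, toR v ∈ largeWedge O u₁ u₂ := by
      intro v
      rcases le_total (crossR u₁ (toR v - O)) 0 with h | h
      · exact Or.inl h
      · exact Or.inr (by rw [hu]; exact h)
    exact taxi _ hall a b
  · obtain ⟨z, hz1, hz2⟩ := common_point O u₁ u₂ h1 h2 α hα1 hlt hrot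
    have sub1 : {p : ℝ × ℝ | crossR u₁ (p - O) ≤ 0} ⊆ largeWedge O u₁ u₂ :=
      fun p hp => Or.inl hp
    have sub2 : {p : ℝ × ℝ | crossR (-u₂) (p - O) ≤ 0} ⊆ largeWedge O u₁ u₂ := by
      intro p hp
      right
      have hp' : crossR (-u₂) (p - O) ≤ 0 := hp
      have heq' : crossR (-u₂) (p - O) = -crossR u₂ (p - O) := by
        simp [crossR, Prod.fst_neg, Prod.snd_neg]; ring
      rw [heq'] at hp'
      linarith
    have h2' : (-u₂).1 ^ 2 + (-u₂).2 ^ 2 = 1 := by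
      simp only [Prod.fst_neg, Prod.snd_neg, neg_sq]; exact h2
    have hneg : ∀ w : ℤ × ℤ, 0 ≤ crossR u₂ (toR w - O) →
        crossR (-u₂) (toR w - O) ≤ 0 := by
      intro w hw
      have : crossR (-u₂) (toR w - O) = -crossR u₂ (toR w - O) := by
        simp [crossR, Prod.fst_neg, Prod.snd_neg]; ring
      rw [this]; linarith
    have key : ∀ w : ℤ × ℤ, toR w ∈ largeWedge O u₁ u₂ →
        Relation.ReflTransGen (adj (largeWedge O u₁ u₂)) w z := by
      intro w hw
      rcases hw with h | h
      · exact rtg_mono sub1 (halfplane_conn u₁ O h1 w z h hz1)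
      · exact rtg_mono sub2 (halfplane_conn (-u₂) O h2' w z (hneg w h) (hneg z hz2))
    exact (key a ha).trans
      (by haveI : Std.Symm (adj (largeWedge O u₁ u₂)) := ⟨fun x y h => adj_symm _ h⟩; exact Relation.ReflTransGen.symmetric.symm _ _ (key b hb))
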